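/- For any λ ≥ λ_upper := min_ω P_q*( (1/n)Dx + (I − (1/n)DDᵀ)ω ), the solution û of the convex clustering problem minimize (1/2)‖x − u‖² + λ P_q(Du) satisfies Dû = 0, i.e., all estimated cluster centers are equal. Conversely, if λ < λ_upper then Dû ≠ 0. -/

import Mathlib

open Matrix

abbrev PairIdx (n : ℕ) := {e : Fin n × Fin n // e.1 < e.2}

/-- The complete-graph difference matrix `D`. -/
noncomputable def Dmat (n p : ℕ) : Matrix (PairIdx n × Fin p) (Fin n × Fin p) ℝ :=
  fun ej kl =>
    (if kl.1 = ej.1.val.1 then (1 : ℝ) else if kl.1 = ej.1.val.2 then -1 else 0) *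
      (if ej.2 = kl.2 then 1 else 0)

/-- The blockwise penalty P_q(b) = Σ_{i<i'} ‖b_{C(i,i')}‖_q, with the base norm on each
p-dimensional block given by `normq`. -/
noncomputable def Pq (n p : ℕ) (normq : (Fin p → ℝ) → ℝ) (b : PairIdx n × Fin p → ℝ) : ℝ :=
  ∑ e : PairIdx n, normq (fun j => b (e, j))

/-- The blockwise dual norm P_q*(b) = max_{i<i'} ‖b_{C(i,i')}‖_s, with the dual base norm on
each p-dimensional block given by `norms`. -/
noncomputable def Pstar (n p : ℕ) (norms : (Fin p → ℝ) → ℝ) (b : PairIdx n × Fin p → ℝ) : ℝ :=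
  ⨆ e : PairIdx n, norms (fun j => b (e, j))

lemma Dmul (n p : ℕ) (u : Fin n × Fin p → ℝ) (e : PairIdx n) (j : Fin p) :
    (Dmat n p).mulVec u (e, j) = u (e.val.1, j) - u (e.val.2, j) := by
  classical
  have hne : e.val.1 ≠ e.val.2 := ne_of_lt e.prop
  simp only [Matrix.mulVec, dotProduct, Dmat]
  rw [Fintype.sum_prod_type]
  have h1 : ∀ k : Fin n, ∑ l : Fin p,
      ((if k = e.val.1 then (1:ℝ) else if k = e.val.2 then -1 else 0) *
        (if j = l then 1 else 0)) * u (k, l)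
      = (if k = e.val.1 then (1:ℝ) else if k = e.val.2 then -1 else 0) * u (k, j) := by
    intro k
    rw [Finset.sum_eq_single j]
    · simp
    · intro l _ hl; simp [Ne.symm hl]
    · simp
  simp only [h1]
  have h2 : ∀ k : Fin n, (if k = e.val.1 then (1:ℝ) else if k = e.val.2 then -1 else 0) * u (k, j)
      = (if k = e.val.1 then u (e.val.1, j) else 0) + (if k = e.val.2 then -u (e.val.2, j) else 0) := by
    intro k
    by_cases h : k = e.val.1
    · subst h; simp [hne]
    · by_cases h' : k = e.val.2 <;> simp [h, h', Ne.symm hne]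
  simp only [h2, Finset.sum_add_distrib, Finset.sum_ite_eq', Finset.mem_univ, if_true]
  ring

lemma pairSum (n : ℕ) (f g : Fin n → ℝ) :
    ∑ e : PairIdx n, (f e.val.1 - f e.val.2) * (g e.val.1 - g e.val.2)
      = n * (∑ k, f k * g k) - (∑ k, f k) * (∑ k, g k) := by
  classical
  set h : Fin n × Fin n → ℝ := fun q => (f q.1 - f q.2) * (g q.1 - g q.2) with hh
  have hsub : ∑ e : PairIdx n, (f e.val.1 - f e.val.2) * (g e.val.1 - g e.val.2)
      = ∑ q ∈ Finset.univ.filter (fun q : Fin n × Fin n => q.1 < q.2), h q := by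
    rw [Finset.sum_subtype (p := fun q : Fin n × Fin n => q.1 < q.2)
      (Finset.univ.filter (fun q : Fin n × Fin n => q.1 < q.2)) (by intro q; simp) h]
  have hswap : ∑ q ∈ Finset.univ.filter (fun q : Fin n × Fin n => q.2 < q.1), h q
      = ∑ q ∈ Finset.univ.filter (fun q : Fin n × Fin n => q.1 < q.2), h q := by
    apply Finset.sum_nbij' (fun q => Prod.swap q) (fun q => Prod.swap q)
    · intro q hq; simp at hq ⊢; exact hq
    · intro q hq; simp at hq ⊢; exact hq
    · intro q _; simp
    · intro q _; simp
    · intro q _; simp [hh]; ring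
  have hdiag : ∑ q ∈ Finset.univ.filter (fun q : Fin n × Fin n => q.1 = q.2), h q = 0 := by
    apply Finset.sum_eq_zero; intro q hq; simp at hq; simp [hh, hq]
  have hpart : (Finset.univ : Finset (Fin n × Fin n))
      = (Finset.univ.filter (fun q : Fin n × Fin n => q.1 < q.2)) ∪
        ((Finset.univ.filter (fun q : Fin n × Fin n => q.2 < q.1)) ∪
         (Finset.univ.filter (fun q : Fin n × Fin n => q.1 = q.2))) := by
    ext q; simp; omega
  have hd1 : Disjoint (Finset.univ.filter (fun q : Fin n × Fin n => q.2 < q.1))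
      (Finset.univ.filter (fun q : Fin n × Fin n => q.1 = q.2)) := by
    rw [Finset.disjoint_left]; intro q hq hq'; simp at hq hq'; omega
  have hd2 : Disjoint (Finset.univ.filter (fun q : Fin n × Fin n => q.1 < q.2))
      ((Finset.univ.filter (fun q : Fin n × Fin n => q.2 < q.1)) ∪
       (Finset.univ.filter (fun q : Fin n × Fin n => q.1 = q.2))) := by
    rw [Finset.disjoint_left]; intro q hq hq'; simp at hq hq'; omega
  have h0 := congrArg (fun s : Finset (Fin n × Fin n) => ∑ q ∈ s, h q) hpart
  simp only [Finset.sum_union hd2, Finset.sum_union hd1, hswap, hdiag] at h0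
  have hexp : ∑ q : Fin n × Fin n, h q
      = 2 * (n * (∑ k, f k * g k) - (∑ k, f k) * (∑ k, g k)) := by
    rw [Fintype.sum_prod_type]
    simp only [hh]
    have key : ∀ i : Fin n, ∑ j : Fin n, (f i - f j) * (g i - g j)
        = n * (f i * g i) - f i * (∑ k, g k) - (∑ k, f k) * g i + ∑ k, f k * g k := by
      intro i
      have e1 : ∀ j : Fin n, (f i - f j) * (g i - g j)
          = f i * g i - f i * g j - f j * g i + f j * g j := by intro j; ring
      simp only [e1, Finset.sum_add_distrib, Finset.sum_sub_distrib, Finset.sum_const,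
        Finset.card_univ, Fintype.card_fin, ← Finset.mul_sum, ← Finset.sum_mul, nsmul_eq_mul]
    simp only [key, Finset.sum_add_distrib, Finset.sum_sub_distrib, Finset.sum_const,
      Finset.card_univ, Fintype.card_fin, ← Finset.mul_sum, ← Finset.sum_mul, nsmul_eq_mul]
    push_cast; ring
  rw [hsub]; linarith [h0, hexp]

lemma Ddot (n p : ℕ) (u v : Fin n × Fin p → ℝ) :
    ((Dmat n p).mulVec u) ⬝ᵥ ((Dmat n p).mulVec v)
      = n * (u ⬝ᵥ v) - ∑ j : Fin p, (∑ k, u (k, j)) * (∑ k, v (k, j)) := by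
  classical
  simp only [dotProduct]
  rw [Fintype.sum_prod_type, Finset.sum_comm]
  have key : ∀ j : Fin p, ∑ e : PairIdx n,
      (Dmat n p).mulVec u (e, j) * (Dmat n p).mulVec v (e, j)
      = n * (∑ k, u (k, j) * v (k, j)) - (∑ k, u (k, j)) * (∑ k, v (k, j)) := by
    intro j
    simp only [Dmul]
    exact pairSum n (fun k => u (k, j)) (fun k => v (k, j))
  have hd : u ⬝ᵥ v = ∑ j : Fin p, ∑ k : Fin n, u (k, j) * v (k, j) := by
    simp only [dotProduct]
    rw [Fintype.sum_prod_type, Finset.sum_comm]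
  simp only [key]
  rw [Finset.sum_sub_distrib, ← Finset.mul_sum, ← hd]
  rfl

-- test-vector lemma
lemma dot_ext {ι : Type*} [Fintype ι] [DecidableEq ι] (u w : ι → ℝ)
    (h : ∀ v : ι → ℝ, u ⬝ᵥ v = w ⬝ᵥ v) : u = w := by
  funext i
  have := h (Pi.single i 1)
  simpa [dotProduct_single] using this

lemma colsum (n p : ℕ) (ω : PairIdx n × Fin p → ℝ) (j : Fin p) :
    ∑ k, ((Dmat n p)ᵀ.mulVec ω) (k, j) = 0 := by
  classical
  have hchi : (Dmat n p).mulVec (fun kl => if kl.2 = j then (1:ℝ) else 0) = 0 := by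
    funext ej
    obtain ⟨e, l⟩ := ej
    rw [Dmul]; simp
  have h1 : ((Dmat n p)ᵀ.mulVec ω) ⬝ᵥ (fun kl => if kl.2 = j then (1:ℝ) else 0)
      = ω ⬝ᵥ ((Dmat n p).mulVec (fun kl => if kl.2 = j then (1:ℝ) else 0)) := by
    rw [Matrix.mulVec_transpose, ← Matrix.dotProduct_mulVec]
  rw [hchi] at h1
  simp only [dotProduct, mul_ite, mul_one, mul_zero] at h1
  rw [Fintype.sum_prod_type_right, Finset.sum_comm] at h1
  simp only [Finset.sum_ite_eq', Finset.mem_univ, if_true] at h1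
  simpa using h1

section PqPstar
variable {n p : ℕ} {normq norms : (Fin p → ℝ) → ℝ}
  (hhom : ∀ (c : ℝ) (u : Fin p → ℝ), normq (c • u) = |c| * normq u)
  (htri : ∀ u v : Fin p → ℝ, normq (u + v) ≤ normq u + normq v)
  (hnonneg : ∀ u : Fin p → ℝ, 0 ≤ normq u)
  (hdual : ∀ v : Fin p → ℝ,
      IsGreatest {r : ℝ | ∃ u : Fin p → ℝ, normq u ≤ 1 ∧ r = ∑ j, u j * v j} (norms v))
  (hdef : ∀ u : Fin p → ℝ, normq u = 0 → u = 0)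

include hhom in
lemma normq_zero : normq 0 = 0 := by
  have := hhom 0 0
  simpa using this

include hhom in
lemma Pq_zero : Pq n p normq 0 = 0 := by
  unfold Pq
  apply Finset.sum_eq_zero
  intro e _
  exact normq_zero hhom

include hhom in
lemma Pq_smul (c : ℝ) (b : PairIdx n × Fin p → ℝ) :
    Pq n p normq (c • b) = |c| * Pq n p normq b := by
  unfold Pq
  rw [Finset.mul_sum]
  apply Finset.sum_congr rfl
  intro e _
  have : (fun j : Fin p => (c • b) (e, j)) = c • (fun j => b (e, j)) := rfl
  rw [this, hhom]

include htri in
lemma Pq_add_le (b c : PairIdx n × Fin p → ℝ) :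
    Pq n p normq (b + c) ≤ Pq n p normq b + Pq n p normq c := by
  unfold Pq
  rw [← Finset.sum_add_distrib]
  apply Finset.sum_le_sum
  intro e _
  have : (fun j : Fin p => (b + c) (e, j)) = (fun j => b (e, j)) + (fun j => c (e, j)) := rfl
  rw [this]
  exact htri _ _

include hnonneg in
lemma Pq_nonneg (b : PairIdx n × Fin p → ℝ) : 0 ≤ Pq n p normq b :=
  Finset.sum_nonneg fun e _ => hnonneg _

include hhom hdual in
lemma norms_nonneg (v : Fin p → ℝ) : 0 ≤ norms v := by
  apply (hdual v).2
  exact ⟨0, by simp [normq_zero hhom], by simp⟩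

include hhom hdual in
lemma Pstar_nonneg (hn : 2 ≤ n) (b : PairIdx n × Fin p → ℝ) : 0 ≤ Pstar n p norms b := by
  have hne : Nonempty (PairIdx n) :=
    ⟨⟨(⟨0, by omega⟩, ⟨1, by omega⟩), by exact Fin.mk_lt_mk.mpr one_pos⟩⟩
  obtain ⟨e⟩ := hne
  calc (0:ℝ) ≤ norms (fun j => b (e, j)) := norms_nonneg hhom hdual _
    _ ≤ Pstar n p norms b := by
        unfold Pstar
        exact le_ciSup (f := fun e : PairIdx n => norms (fun j => b (e, j)))
          (Set.Finite.bddAbove (Set.finite_range _)) e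

include hhom hnonneg hdual hdef in
lemma holder (hn : 2 ≤ n) (g b : PairIdx n × Fin p → ℝ) :
    g ⬝ᵥ b ≤ Pstar n p norms g * Pq n p normq b := by
  have hblock : ∀ e : PairIdx n, ∑ j, g (e, j) * b (e, j)
      ≤ norms (fun j => g (e, j)) * normq (fun j => b (e, j)) := by
    intro e
    set t := normq (fun j => b (e, j)) with ht
    rcases eq_or_lt_of_le (hnonneg (fun j => b (e, j))) with h0 | hpos
    · have hb0 : (fun j => b (e, j)) = 0 := hdef _ h0.symm
      have hz : ∀ j, b (e, j) = 0 := fun j => congrFun hb0 j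
      have hz2 : (∑ j, g (e, j) * b (e, j)) = 0 := by simp [hz]
      rw [hz2]
      exact mul_nonneg (norms_nonneg hhom hdual _) (hnonneg _)
    · have htpos : 0 < t := hpos
      set u : Fin p → ℝ := t⁻¹ • (fun j => b (e, j)) with hu
      have hu1 : normq u ≤ 1 := by
        rw [hu, hhom, abs_of_pos (inv_pos.mpr htpos), ← ht, inv_mul_cancel₀ (ne_of_gt htpos)]
      have hmem : ∑ j, u j * g (e, j)
          ≤ norms (fun j => g (e, j)) := (hdual _).2 ⟨u, hu1, rfl⟩
      have hsum : ∑ j, u j * g (e, j) = t⁻¹ * ∑ j, g (e, j) * b (e, j) := by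
        rw [Finset.mul_sum]
        apply Finset.sum_congr rfl
        intro j _
        simp [hu]
        ring
      rw [hsum] at hmem
      have := mul_le_mul_of_nonneg_left hmem (le_of_lt htpos)
      rw [← mul_assoc, mul_inv_cancel₀ (ne_of_gt htpos), one_mul] at this
      calc ∑ j, g (e, j) * b (e, j) ≤ t * norms (fun j => g (e, j)) := this
        _ = norms (fun j => g (e, j)) * t := mul_comm _ _
  have hsup : ∀ e : PairIdx n, norms (fun j => g (e, j)) ≤ Pstar n p norms g := by
    intro e
    unfold Pstar
    exact le_ciSup (f := fun e : PairIdx n => norms (fun j => g (e, j)))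
      (Set.Finite.bddAbove (Set.finite_range _)) e
  calc g ⬝ᵥ b = ∑ e : PairIdx n, ∑ j, g (e, j) * b (e, j) := by
        simp only [dotProduct]; rw [Fintype.sum_prod_type]
    _ ≤ ∑ e : PairIdx n, norms (fun j => g (e, j)) * normq (fun j => b (e, j)) :=
        Finset.sum_le_sum fun e _ => hblock e
    _ ≤ ∑ e : PairIdx n, Pstar n p norms g * normq (fun j => b (e, j)) :=
        Finset.sum_le_sum fun e _ => mul_le_mul_of_nonneg_right (hsup e) (hnonneg _)
    _ = Pstar n p norms g * Pq n p normq b := by rw [Pq, Finset.mul_sum]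

end PqPstar


set_option maxHeartbeats 2000000 in
/-- with λ_upper = min_ω P_q*((1/n)Dx + (I − (1/n)DDᵀ)ω), the minimizer û
of (1/2)‖x − u‖² + λ P_q(Du) satisfies Dû = 0 iff λ ≥ λ_upper. -/
theorem stmt11 (n p : ℕ) (hn : 2 ≤ n)
    (normq norms : (Fin p → ℝ) → ℝ)
    (hhom : ∀ (c : ℝ) (u : Fin p → ℝ), normq (c • u) = |c| * normq u)
    (htri : ∀ u v : Fin p → ℝ, normq (u + v) ≤ normq u + normq v)
    (hnonneg : ∀ u : Fin p → ℝ, 0 ≤ normq u)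
    (hdual : ∀ v : Fin p → ℝ,
      IsGreatest {r : ℝ | ∃ u : Fin p → ℝ, normq u ≤ 1 ∧ r = ∑ j, u j * v j} (norms v))
    (hdef : ∀ u : Fin p → ℝ, normq u = 0 → u = 0)
    (x : Fin n × Fin p → ℝ) (lam : ℝ) (hlam : 0 ≤ lam)
    (uhat : Fin n × Fin p → ℝ)
    (hu : ∀ u : Fin n × Fin p → ℝ,
      (1/2) * ∑ i, (x i - uhat i)^2 + lam * Pq n p normq ((Dmat n p).mulVec uhat)
        ≤ (1/2) * ∑ i, (x i - u i)^2 + lam * Pq n p normq ((Dmat n p).mulVec u))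
    (lamUpper : ℝ)
    (hupper : lamUpper = sInf {r : ℝ | ∃ ω : PairIdx n × Fin p → ℝ,
      r = Pstar n p norms ((n : ℝ)⁻¹ • (Dmat n p).mulVec x
            + (ω - (n : ℝ)⁻¹ • (Dmat n p * (Dmat n p)ᵀ).mulVec ω))}) :
    (lamUpper ≤ lam → (Dmat n p).mulVec uhat = 0) ∧
      (lam < lamUpper → (Dmat n p).mulVec uhat ≠ 0) := by

  classical
  have hn0 : (n : ℝ) ≠ 0 := Nat.cast_ne_zero.mpr (by omega)
  set S : Set ℝ := {r : ℝ | ∃ ω : PairIdx n × Fin p → ℝ,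
      r = Pstar n p norms ((n : ℝ)⁻¹ • (Dmat n p).mulVec x
            + (ω - (n : ℝ)⁻¹ • (Dmat n p * (Dmat n p)ᵀ).mulVec ω))} with hSdef
  set ubar : Fin n × Fin p → ℝ := fun kl => (n : ℝ)⁻¹ * ∑ k, x (k, kl.2) with hubar
  have hDubar : (Dmat n p).mulVec ubar = 0 := by
    funext ej
    obtain ⟨e, j⟩ := ej
    rw [Dmul]
    simp [hubar]
  have hL1 : ∀ v : Fin n × Fin p → ℝ,
      (x - ubar) ⬝ᵥ v = (n : ℝ)⁻¹ * (((Dmat n p).mulVec x) ⬝ᵥ ((Dmat n p).mulVec v)) := by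
    intro v
    rw [Ddot]
    have h1 : (x - ubar) ⬝ᵥ v = x ⬝ᵥ v - ubar ⬝ᵥ v := sub_dotProduct _ _ _
    have h2 : ubar ⬝ᵥ v = (n : ℝ)⁻¹ * ∑ j : Fin p, (∑ k, x (k, j)) * (∑ k, v (k, j)) := by
      simp only [hubar, dotProduct]
      rw [Fintype.sum_prod_type, Finset.sum_comm, Finset.mul_sum]
      apply Finset.sum_congr rfl
      intro j _
      show ∑ k : Fin n, ((n:ℝ)⁻¹ * ∑ k' : Fin n, x (k', j)) * v (k, j)
          = (n:ℝ)⁻¹ * ((∑ k' : Fin n, x (k', j)) * ∑ k : Fin n, v (k, j))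
      rw [← Finset.mul_sum, mul_assoc]
    rw [h1, h2]
    field_simp
  have hL2 : ∀ (ω : PairIdx n × Fin p → ℝ) (u : Fin n × Fin p → ℝ),
      (ω - (n : ℝ)⁻¹ • (Dmat n p * (Dmat n p)ᵀ).mulVec ω) ⬝ᵥ ((Dmat n p).mulVec u) = 0 := by
    intro ω u
    have hmm : (Dmat n p * (Dmat n p)ᵀ).mulVec ω
        = (Dmat n p).mulVec ((Dmat n p)ᵀ.mulVec ω) := (Matrix.mulVec_mulVec _ _ _).symm
    have hdd : ((Dmat n p).mulVec ((Dmat n p)ᵀ.mulVec ω)) ⬝ᵥ ((Dmat n p).mulVec u)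
        = n * (((Dmat n p)ᵀ.mulVec ω) ⬝ᵥ u) := by
      rw [Ddot]
      simp [colsum]
    have hadj : ((Dmat n p)ᵀ.mulVec ω) ⬝ᵥ u = ω ⬝ᵥ ((Dmat n p).mulVec u) := by
      rw [Matrix.mulVec_transpose, ← Matrix.dotProduct_mulVec]
    rw [sub_dotProduct, smul_dotProduct, hmm, hdd, hadj, smul_eq_mul,
      ← mul_assoc, inv_mul_cancel₀ hn0, one_mul, sub_self]
  have hSne : S.Nonempty := ⟨_, ⟨0, rfl⟩⟩
  have hSbdd : ∀ r ∈ S, (0 : ℝ) ≤ r := by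
    rintro r ⟨ω, rfl⟩
    exact Pstar_nonneg hhom hdual hn _
  have hPbar : Pq n p normq ((Dmat n p).mulVec ubar) = 0 := by
    rw [hDubar]
    exact Pq_zero hhom
  constructor
  · -- forward direction
    intro hle
    have claimA : ∀ u : Fin n × Fin p → ℝ,
        (1/2) * ∑ i, (x i - ubar i)^2 + lam * Pq n p normq ((Dmat n p).mulVec ubar)
          ≤ (1/2) * ∑ i, (x i - u i)^2 + lam * Pq n p normq ((Dmat n p).mulVec u) := by
      intro u
      apply le_of_forall_pos_le_add
      intro δ hδ
      set Pu := Pq n p normq ((Dmat n p).mulVec u) with hPudef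
      have hPu0 : 0 ≤ Pu := Pq_nonneg hnonneg _
      set ε := δ / (Pu + 1) with hεdef
      have hεpos : 0 < ε := div_pos hδ (by linarith)
      obtain ⟨r, hrS, hrlt⟩ := Real.lt_sInf_add_pos hSne hεpos
      rw [← hupper] at hrlt
      obtain ⟨ω, rfl⟩ := hrS
      set g := (n : ℝ)⁻¹ • (Dmat n p).mulVec x
            + (ω - (n : ℝ)⁻¹ • (Dmat n p * (Dmat n p)ᵀ).mulVec ω) with hgdef
      have hinner : (x - ubar) ⬝ᵥ (u - ubar) = g ⬝ᵥ ((Dmat n p).mulVec u) := by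
        have e1 : (x - ubar) ⬝ᵥ (u - ubar) = (x - ubar) ⬝ᵥ u - (x - ubar) ⬝ᵥ ubar :=
          dotProduct_sub _ _ _
        have e2 : (x - ubar) ⬝ᵥ ubar = 0 := by
          rw [hL1, hDubar]
          simp
        have e3 : (x - ubar) ⬝ᵥ u
            = ((n : ℝ)⁻¹ • (Dmat n p).mulVec x) ⬝ᵥ ((Dmat n p).mulVec u) := by
          rw [hL1, smul_dotProduct, smul_eq_mul]
        have e4 : g ⬝ᵥ ((Dmat n p).mulVec u)
            = ((n : ℝ)⁻¹ • (Dmat n p).mulVec x) ⬝ᵥ ((Dmat n p).mulVec u) := by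
          rw [hgdef, add_dotProduct, hL2, add_zero]
        rw [e1, e2, e3, e4]
        ring
      have hgb : g ⬝ᵥ ((Dmat n p).mulVec u) ≤ (lam + ε) * Pu := by
        calc g ⬝ᵥ ((Dmat n p).mulVec u) ≤ Pstar n p norms g * Pu :=
              holder hhom hnonneg hdual hdef hn _ _
          _ ≤ (lam + ε) * Pu := by
              apply mul_le_mul_of_nonneg_right _ hPu0
              have : Pstar n p norms g < lamUpper + ε := hrlt
              linarith
      have hquad : ∑ i, (x i - u i)^2
          = ∑ i, (x i - ubar i)^2 - 2 * ((x - ubar) ⬝ᵥ (u - ubar)) + ∑ i, (u i - ubar i)^2 := by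
        simp only [dotProduct, Pi.sub_apply]
        rw [Finset.mul_sum, ← Finset.sum_sub_distrib, ← Finset.sum_add_distrib]
        apply Finset.sum_congr rfl
        intro i _
        ring
      have hsq : 0 ≤ ∑ i, (u i - ubar i)^2 := Finset.sum_nonneg fun i _ => sq_nonneg _
      have hεPu : ε * Pu ≤ δ := by
        rw [hεdef, div_mul_eq_mul_div, div_le_iff₀ (by linarith : (0:ℝ) < Pu + 1)]
        nlinarith
      rw [hPbar]
      nlinarith [hinner, hgb, hquad, hsq, hεPu, mul_nonneg hlam hPu0]
    have h1 := claimA uhat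
    have h2 := hu ubar
    set m : Fin n × Fin p → ℝ := (1/2 : ℝ) • (uhat + ubar) with hmdef
    have hDm : (Dmat n p).mulVec m = (1/2 : ℝ) • ((Dmat n p).mulVec uhat) := by
      rw [hmdef, Matrix.mulVec_smul, Matrix.mulVec_add, hDubar, add_zero]
    have hPm : Pq n p normq ((Dmat n p).mulVec m)
        = (1/2) * Pq n p normq ((Dmat n p).mulVec uhat) := by
      rw [hDm, Pq_smul hhom]
      norm_num
    have hquadm : ∑ i, (x i - m i)^2
        = (1/2) * ∑ i, (x i - uhat i)^2 + (1/2) * ∑ i, (x i - ubar i)^2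
          - (1/4) * ∑ i, (uhat i - ubar i)^2 := by
      rw [Finset.mul_sum, Finset.mul_sum, Finset.mul_sum, ← Finset.sum_add_distrib,
        ← Finset.sum_sub_distrib]
      apply Finset.sum_congr rfl
      intro i _
      simp only [hmdef, Pi.smul_apply, Pi.add_apply, smul_eq_mul]
      ring
    have h3 := hu m
    rw [hPm, hquadm] at h3
    rw [hPbar] at h1 h2
    have hQ : ∑ i, (uhat i - ubar i)^2 ≤ 0 := by linarith
    have hQ0 : ∀ i, uhat i = ubar i := by
      intro i
      have hnn := Finset.sum_nonneg (fun i (_ : i ∈ Finset.univ) => sq_nonneg (uhat i - ubar i))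
      have hQe : ∑ i, (uhat i - ubar i)^2 = 0 := le_antisymm hQ hnn
      have := (Finset.sum_eq_zero_iff_of_nonneg (fun i _ => sq_nonneg _)).mp hQe i
        (Finset.mem_univ i)
      have h5 : uhat i - ubar i = 0 := by
        nlinarith [this]
      linarith
    funext ej
    obtain ⟨e, j⟩ := ej
    rw [Dmul, hQ0, hQ0]
    simp [hubar]
  · -- converse direction
    intro hlt hD0
    have foc : ∀ v : Fin n × Fin p → ℝ,
        (x - uhat) ⬝ᵥ v ≤ lam * Pq n p normq ((Dmat n p).mulVec v) := by
      intro v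
      apply le_of_forall_pos_le_add
      intro δ hδ
      set Sv := ∑ i, (v i)^2 with hSvdef
      have hSv0 : 0 ≤ Sv := Finset.sum_nonneg fun i _ => sq_nonneg _
      set t := δ / (Sv + 1) with htdef
      have ht : 0 < t := div_pos hδ (by linarith)
      have hut := hu (uhat + t • v)
      have hDq : (Dmat n p).mulVec (uhat + t • v) = t • ((Dmat n p).mulVec v) := by
        rw [Matrix.mulVec_add, Matrix.mulVec_smul, hD0, zero_add]
      have hPq2 : Pq n p normq ((Dmat n p).mulVec (uhat + t • v))
          = t * Pq n p normq ((Dmat n p).mulVec v) := by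
        rw [hDq, Pq_smul hhom, abs_of_pos ht]
      have hquad2 : ∑ i, (x i - (uhat + t • v) i)^2
          = ∑ i, (x i - uhat i)^2 - 2 * t * ((x - uhat) ⬝ᵥ v) + t^2 * Sv := by
        simp only [dotProduct, Pi.add_apply, Pi.smul_apply, smul_eq_mul, Pi.sub_apply, hSvdef]
        rw [Finset.mul_sum, Finset.mul_sum, ← Finset.sum_sub_distrib, ← Finset.sum_add_distrib]
        apply Finset.sum_congr rfl
        intro i _
        ring
      rw [hPq2, hquad2, hD0, Pq_zero hhom] at hut
      have h5 : t * ((x - uhat) ⬝ᵥ v)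
          ≤ t * (lam * Pq n p normq ((Dmat n p).mulVec v) + (t / 2) * Sv) := by
        nlinarith [hut]
      have h6 : (x - uhat) ⬝ᵥ v
          ≤ lam * Pq n p normq ((Dmat n p).mulVec v) + (t / 2) * Sv :=
        le_of_mul_le_mul_left h5 ht
      have h7 : (t / 2) * Sv ≤ δ := by
        rw [htdef, div_mul_eq_mul_div]
        rw [div_le_iff₀ (by norm_num : (0:ℝ) < 2)]
        rw [div_mul_eq_mul_div, div_le_iff₀ (by linarith : (0:ℝ) < Sv + 1)]
        nlinarith
      linarith
    have hcs : ∀ j : Fin p, ∑ k, (x (k, j) - uhat (k, j)) = 0 := by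
      intro j
      set χ : Fin n × Fin p → ℝ := fun kl => if kl.2 = j then 1 else 0 with hχdef
      have hDχ : (Dmat n p).mulVec χ = 0 := by
        funext ej
        obtain ⟨e, l⟩ := ej
        rw [Dmul]
        simp [hχdef]
      have h1 := foc χ
      have h2 := foc (-χ)
      have hDχ' : (Dmat n p).mulVec (-χ) = 0 := by rw [Matrix.mulVec_neg, hDχ, neg_zero]
      rw [hDχ, Pq_zero hhom, mul_zero] at h1
      rw [hDχ', Pq_zero hhom, mul_zero] at h2
      have hdot : (x - uhat) ⬝ᵥ χ = ∑ k, (x (k, j) - uhat (k, j)) := by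
        simp only [dotProduct, hχdef, Pi.sub_apply, mul_ite, mul_one, mul_zero]
        rw [Fintype.sum_prod_type_right, Finset.sum_comm]
        simp only [Finset.sum_ite_eq', Finset.mem_univ, if_true]
      rw [hdot] at h1
      rw [dotProduct_neg, hdot] at h2
      linarith
    set w : Fin n × Fin p → ℝ := x - uhat with hwdef
    have hcsw : ∀ j : Fin p, ∑ k, w (k, j) = 0 := by
      intro j
      simpa [hwdef] using hcs j
    set ω0 : PairIdx n × Fin p → ℝ := (n : ℝ)⁻¹ • ((Dmat n p).mulVec w) with hω0def
    have hDt : (Dmat n p)ᵀ.mulVec ω0 = w := by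
      apply dot_ext
      intro v
      have h1 : ((Dmat n p)ᵀ.mulVec ω0) ⬝ᵥ v = ω0 ⬝ᵥ ((Dmat n p).mulVec v) := by
        rw [Matrix.mulVec_transpose, ← Matrix.dotProduct_mulVec]
      rw [h1, hω0def, smul_dotProduct, smul_eq_mul, Ddot]
      simp only [hcsw, zero_mul, Finset.sum_const_zero, sub_zero]
      rw [← mul_assoc, inv_mul_cancel₀ hn0, one_mul]
    set Dlin : (Fin n × Fin p → ℝ) →ₗ[ℝ] (PairIdx n × Fin p → ℝ) :=
      Matrix.mulVecLin (Dmat n p) with hDlin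
    set g0 : (PairIdx n × Fin p → ℝ) →ₗ[ℝ] ℝ :=
      { toFun := fun b => ω0 ⬝ᵥ b
        map_add' := fun b c => dotProduct_add _ _ _
        map_smul' := fun c b => by simp [dotProduct_smul] } with hg0
    have hbound : ∀ y : (g0.toPMap (LinearMap.range Dlin)).domain,
        (g0.toPMap (LinearMap.range Dlin)) y ≤ lam * Pq n p normq (y : _) := by
      intro y
      obtain ⟨v, hv⟩ := y.2
      show g0 (y : PairIdx n × Fin p → ℝ) ≤ lam * Pq n p normq (y : _)
      have hDv : Dlin v = (Dmat n p).mulVec v := rfl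
      have h1 : g0 (y : _) = w ⬝ᵥ v := by
        rw [← hv, hDv]
        show ω0 ⬝ᵥ ((Dmat n p).mulVec v) = w ⬝ᵥ v
        rw [Matrix.dotProduct_mulVec, ← Matrix.mulVec_transpose, hDt]
      rw [h1, ← hv, hDv]
      exact foc v
    obtain ⟨g', hg'eq, hg'le⟩ := exists_extension_of_le_sublinear
      (g0.toPMap (LinearMap.range Dlin))
      (fun b => lam * Pq n p normq b)
      (fun c hc b => by
        show lam * Pq n p normq (c • b) = c * (lam * Pq n p normq b)
        rw [Pq_smul hhom, abs_of_pos hc]; ring)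
      (fun b c => by
        show lam * Pq n p normq (b + c) ≤ lam * Pq n p normq b + lam * Pq n p normq c
        have h := Pq_add_le htri b c
        have := mul_le_mul_of_nonneg_left h hlam
        linarith [this])
      hbound
    set cvec : PairIdx n × Fin p → ℝ :=
      fun i => g' (fun i' => if i = i' then 1 else 0) with hcdef
    have hrepr : ∀ b : PairIdx n × Fin p → ℝ, g' b = cvec ⬝ᵥ b := by
      intro b
      conv_lhs => rw [pi_eq_sum_univ b]
      rw [map_sum]
      simp only [_root_.map_smul, smul_eq_mul]
      simp only [dotProduct, hcdef]
      apply Finset.sum_congr rfl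
      intro i _
      ring
    have hPstarc : Pstar n p norms cvec ≤ lam := by
      unfold Pstar
      haveI : Nonempty (PairIdx n) :=
        ⟨⟨(⟨0, by omega⟩, ⟨1, by omega⟩), Fin.mk_lt_mk.mpr one_pos⟩⟩
      apply ciSup_le
      intro e
      obtain ⟨uu, huu1, huu2⟩ := (hdual (fun j => cvec (e, j))).1
      set ι : PairIdx n × Fin p → ℝ := fun q => if q.1 = e then uu q.2 else 0 with hιdef
      have hι1 : g' ι = ∑ j, uu j * cvec (e, j) := by
        rw [hrepr]
        simp only [dotProduct, hιdef]
        rw [Fintype.sum_prod_type]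
        rw [Finset.sum_eq_single e]
        · apply Finset.sum_congr rfl
          intro j _
          simp [mul_comm]
        · intro e' _ he'
          simp [he']
        · simp
      have hι2 : Pq n p normq ι = normq uu := by
        unfold Pq
        rw [Finset.sum_eq_single e]
        · congr 1
          funext j
          simp [hιdef]
        · intro e' _ he'
          have hz : (fun j => ι (e', j)) = (0 : Fin p → ℝ) := by
            funext j
            simp [hιdef, he']
          rw [hz]
          exact normq_zero hhom
        · simp
      calc norms (fun j => cvec (e, j)) = ∑ j, uu j * cvec (e, j) := huu2
        _ = g' ι := hι1.symm
        _ ≤ lam * Pq n p normq ι := hg'le ι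
        _ = lam * normq uu := by rw [hι2]
        _ ≤ lam * 1 := mul_le_mul_of_nonneg_left huu1 hlam
        _ = lam := mul_one lam
    have hcD : ∀ v : Fin n × Fin p → ℝ, cvec ⬝ᵥ ((Dmat n p).mulVec v) = w ⬝ᵥ v := by
      intro v
      rw [← hrepr]
      have hmem : (Dmat n p).mulVec v ∈ LinearMap.range Dlin := ⟨v, rfl⟩
      have h1 := hg'eq ⟨(Dmat n p).mulVec v, hmem⟩
      rw [h1]
      show ω0 ⬝ᵥ ((Dmat n p).mulVec v) = w ⬝ᵥ v
      rw [Matrix.dotProduct_mulVec, ← Matrix.mulVec_transpose, hDt]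
    set a : PairIdx n × Fin p → ℝ := (n : ℝ)⁻¹ • (Dmat n p).mulVec x with hadef
    have hDtc : (Dmat n p)ᵀ.mulVec (cvec - a) = ubar - uhat := by
      apply dot_ext
      intro v
      have h1 : ((Dmat n p)ᵀ.mulVec (cvec - a)) ⬝ᵥ v
          = (cvec - a) ⬝ᵥ ((Dmat n p).mulVec v) := by
        rw [Matrix.mulVec_transpose, ← Matrix.dotProduct_mulVec]
      rw [h1, sub_dotProduct, hcD]
      have h3 : a ⬝ᵥ ((Dmat n p).mulVec v) = (x - ubar) ⬝ᵥ v := by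
        rw [hadef, smul_dotProduct, smul_eq_mul, ← hL1]
      rw [h3, hwdef]
      simp only [dotProduct, Pi.sub_apply]
      rw [← Finset.sum_sub_distrib]
      apply Finset.sum_congr rfl
      intro i _
      ring
    have hDDc : (Dmat n p * (Dmat n p)ᵀ).mulVec (cvec - a) = 0 := by
      rw [← Matrix.mulVec_mulVec, hDtc, Matrix.mulVec_sub, hDubar, hD0, sub_zero]
    have hmem : Pstar n p norms ((n : ℝ)⁻¹ • (Dmat n p).mulVec x
        + ((cvec - a) - (n : ℝ)⁻¹ • (Dmat n p * (Dmat n p)ᵀ).mulVec (cvec - a))) ∈ S :=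
      ⟨cvec - a, rfl⟩
    have heq : (n : ℝ)⁻¹ • (Dmat n p).mulVec x
        + ((cvec - a) - (n : ℝ)⁻¹ • (Dmat n p * (Dmat n p)ᵀ).mulVec (cvec - a)) = cvec := by
      rw [hDDc, smul_zero, sub_zero, ← hadef]
      rw [add_sub_cancel]
    rw [heq] at hmem
    have hle2 : sInf S ≤ Pstar n p norms cvec := csInf_le ⟨0, fun r hr => hSbdd r hr⟩ hmem
    rw [← hupper] at hle2
    linarith
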